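/- Let U_(1) ≤ ... ≤ U_(m) be the order statistics of m i.i.d. Uniform[0,1] random variables. Then for any γ ∈ (0,1), P(∃ k : U_(k) ≤ γ·k/m) ≤ γ (Simes-type step-down bound used in the ordered FWER control). -/

import Mathlib

open MeasureTheory ProbabilityTheory

open scoped ENNReal

section SimesAuxSection
open Finset Pointwise

namespace SimesAux

variable {n : ℕ}

/-- number of coordinates `≤ t` -/
noncomputable def cnt (x : Fin n → ℝ) (t : ℝ) : ℕ := (Finset.univ.filter (fun i => x i ≤ t)).card

lemma cnt_eq_sum (x : Fin n → ℝ) (t : ℝ) :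
    cnt x t = ∑ i : Fin n, if x i ≤ t then 1 else 0 := by
  rw [cnt, Finset.card_filter]

lemma measurable_cnt (t : ℝ) : Measurable (fun x : Fin n → ℝ => cnt x t) := by
  simp only [cnt_eq_sum]
  exact Finset.measurable_sum _ fun i _ => Measurable.ite
    (measurableSet_le (measurable_pi_apply i) measurable_const)
    measurable_const measurable_const

lemma cnt_le (x : Fin n → ℝ) (t : ℝ) : cnt x t ≤ n := by
  simpa [cnt] using (Finset.card_filter_le Finset.univ (fun i => x i ≤ t))

lemma cnt_congr (x y : Fin n → ℝ) (t s : ℝ) (h : ∀ i, x i ≤ t ↔ y i ≤ s) :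
    cnt x t = cnt y s := by
  unfold cnt
  congr 1
  exact Finset.filter_congr (fun i _ => by simp [h i])

lemma cnt_succAbove (x : Fin (n+1) → ℝ) (i : Fin (n+1)) (t : ℝ) :
    cnt x t = (if x i ≤ t then 1 else 0) + cnt (x ∘ i.succAbove) t := by
  rw [cnt_eq_sum, cnt_eq_sum]
  simpa using Fin.sum_univ_succAbove (fun j => if x j ≤ t then (1:ℕ) else 0) i

end SimesAux

namespace SimesAux

/-- the "no crossing" set -/
def S (n : ℕ) (c : ℝ) : Set (Fin n → ℝ) :=
  {x | (∀ i, x i ∈ Set.Ico (0:ℝ) 1) ∧ ∀ k : Fin n, cnt x (c * (k.1 + 1)) ≤ k.1}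

lemma measurableSet_S (n : ℕ) (c : ℝ) : MeasurableSet (S n c) := by
  have : S n c = (⋂ i, {x : Fin n → ℝ | x i ∈ Set.Ico (0:ℝ) 1}) ∩
      (⋂ k : Fin n, {x : Fin n → ℝ | cnt x (c * (k.1 + 1)) ≤ k.1}) := by
    ext x; simp [S, Set.mem_iInter]
  rw [this]
  refine MeasurableSet.inter (MeasurableSet.iInter fun i => ?_)
    (MeasurableSet.iInter fun k => ?_)
  · exact (measurable_pi_apply i) measurableSet_Ico
  · exact (measurable_cnt (c * (k.1 + 1))) (measurableSet_Iic (α := ℕ))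

lemma slice_eq {c u : ℝ} (hu : 0 < u) :
    {y : Fin n → ℝ | (∀ j, 0 ≤ y j ∧ y j < u) ∧ ∀ k : Fin n, cnt y (c * (k.1+1)) ≤ k.1}
      = u • S n (c / u) := by
  ext y
  rw [Set.mem_smul_set_iff_inv_smul_mem₀ hu.ne']
  constructor
  · rintro ⟨h1, h2⟩
    constructor
    · intro j
      have := h1 j
      constructor
      · exact mul_nonneg (inv_nonneg.2 hu.le) this.1
      · calc u⁻¹ * y j < u⁻¹ * u := by
              exact mul_lt_mul_of_pos_left this.2 (inv_pos.2 hu)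
            _ = 1 := inv_mul_cancel₀ hu.ne'
    · intro k
      refine le_trans (le_of_eq (cnt_congr _ y _ (c * (k.1+1)) fun i => ?_)) (h2 k)
      show u⁻¹ * y i ≤ c / u * (k.1+1) ↔ _
      rw [div_mul_eq_mul_div, div_eq_inv_mul]
      exact mul_le_mul_iff_right₀ (inv_pos.2 hu)
  · rintro ⟨h1, h2⟩
    constructor
    · intro j
      have := h1 j
      constructor
      · have := this.1
        have h0 : 0 ≤ u⁻¹ * y j := this
        nlinarith [inv_pos.2 hu]
      · have hlt : u⁻¹ * y j < 1 := (h1 j).2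
        calc y j = u * (u⁻¹ * y j) := by field_simp
          _ < u * 1 := by exact mul_lt_mul_of_pos_left hlt hu
          _ = u := mul_one u
    · intro k
      refine le_trans (le_of_eq (cnt_congr y _ _ (c / u * (k.1+1)) fun i => ?_)) (h2 k)
      show y i ≤ c * (k.1+1) ↔ u⁻¹ * y i ≤ c / u * (k.1+1)
      rw [div_mul_eq_mul_div, div_eq_inv_mul]
      exact (mul_le_mul_iff_right₀ (inv_pos.2 hu)).symm

end SimesAux

namespace SimesAux

lemma volume_S : ∀ (n : ℕ) (c : ℝ), 0 < c →
    ENNReal.ofReal (1 - c * n) ≤ volume (S n c) := by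
  intro n
  induction n with
  | zero =>
    intro c hc
    have hS : S 0 c = Set.univ := by
      ext x; simp [S]
    rw [hS]
    simp only [Nat.cast_zero, mul_zero, sub_zero, ENNReal.ofReal_one]
    rw [MeasureTheory.volume_pi, Measure.pi_univ]
    simp
  | succ n IH =>
    intro c hc
    rcases le_or_gt 1 (c * (n+1 : ℕ)) with hcN | hcN
    · rw [ENNReal.ofReal_eq_zero.2 (by linarith)]
      exact zero_le
    -- nontrivial case : c * (n+1) < 1
    set a : ℝ := c * ((n:ℝ)+1) with ha
    have haN : a = c * ((n+1 : ℕ) : ℝ) := by push_cast [ha]; ring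
    have ha0 : 0 < a := by positivity
    have ha1 : a < 1 := by rw [haN]; exact hcN
    -- the sectors where coordinate i is the strict maximum
    set sec : Fin (n+1) → Set (Fin (n+1) → ℝ) :=
      fun i => {x | ∀ j : Fin n, x (i.succAbove j) < x i} with hsec
    have hsecMeas : ∀ i, MeasurableSet (sec i) := by
      intro i
      have : sec i = ⋂ j : Fin n, {x : Fin (n+1) → ℝ | x (i.succAbove j) < x i} := by
        ext x; simp [hsec, Set.mem_iInter]
      rw [this]
      exact MeasurableSet.iInter fun j =>
        measurableSet_lt (measurable_pi_apply _) (measurable_pi_apply i)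
    -- the product-space set
    set B : Set (ℝ × (Fin n → ℝ)) :=
      {p | p.1 ∈ Set.Ioo a 1 ∧ (∀ j, 0 ≤ p.2 j ∧ p.2 j < p.1) ∧
        ∀ k : Fin n, cnt p.2 (c * (k.1+1)) ≤ k.1} with hB
    have hBmeas : MeasurableSet B := by
      have : B = ({p : ℝ × (Fin n → ℝ) | p.1 ∈ Set.Ioo a 1} ∩
          ((⋂ j : Fin n, ({p : ℝ × (Fin n → ℝ) | 0 ≤ p.2 j} ∩ {p | p.2 j < p.1})) ∩
          (⋂ k : Fin n, {p : ℝ × (Fin n → ℝ) | cnt p.2 (c * (k.1+1)) ≤ k.1}))) := by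
        ext p
        simp only [hB, Set.mem_setOf_eq, Set.mem_inter_iff, Set.mem_iInter]
        try tauto
      rw [this]
      refine (measurable_fst measurableSet_Ioo).inter
        ((MeasurableSet.iInter fun j => MeasurableSet.inter ?_ ?_).inter
          (MeasurableSet.iInter fun k => ?_))
      · exact measurableSet_le measurable_const (measurable_snd.eval)
      · exact measurableSet_lt (measurable_snd.eval) measurable_fst
      · exact ((measurable_cnt (c * (k.1+1))).comp measurable_snd)
          (measurableSet_Iic (α := ℕ))
    -- inclusion of the preimage into the sector piece
    have hincl : ∀ i : Fin (n+1),
        (MeasurableEquiv.piFinSuccAbove (fun _ => ℝ) i) ⁻¹' B ⊆ S (n+1) c ∩ sec i := by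
      intro i x hx
      have hx' : (x i, fun j => x (i.succAbove j)) ∈ B := hx
      obtain ⟨hu, hy, hcnt⟩ := hx'
      have hxi1 : a < x i := hu.1
      have hxi2 : x i < 1 := hu.2
      refine ⟨⟨?_, ?_⟩, fun j => (hy j).2⟩
      · intro i'
        rcases eq_or_ne i' i with rfl | hne
        · exact ⟨le_of_lt (lt_trans ha0 hxi1), hxi2⟩
        · obtain ⟨j, hj⟩ := Fin.exists_succAbove_eq hne
          rw [← hj]
          exact ⟨(hy j).1, lt_trans (hy j).2 hxi2⟩
      · intro k
        have hth : c * ((k.1:ℝ)+1) ≤ a := by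
          rw [ha]
          have hk : (k.1:ℝ) + 1 ≤ (n:ℝ) + 1 := by
            have := Nat.lt_succ_iff.1 k.isLt
            push_cast
            linarith [(Nat.cast_le (α := ℝ)).2 this]
          nlinarith
        have hxi : ¬ x i ≤ c * ((k.1:ℝ)+1) := by
          push_neg
          exact lt_of_le_of_lt hth hxi1
        rw [cnt_succAbove x i, if_neg hxi, zero_add]
        by_cases hk : k.1 < n
        · exact hcnt ⟨k.1, hk⟩
        · have hkn : k.1 = n := le_antisymm (Nat.lt_succ_iff.1 k.isLt) (not_lt.1 hk)
          rw [hkn]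
          exact cnt_le _ _
    -- slices of B
    have hslice : ∀ u : ℝ, volume (Prod.mk u ⁻¹' B)
        = Set.indicator (Set.Ioo a 1) (fun u => volume (u • S n (c/u))) u := by
      intro u
      by_cases hu : u ∈ Set.Ioo a 1
      · rw [Set.indicator_of_mem hu]
        have h0u : 0 < u := lt_trans ha0 hu.1
        congr 1
        rw [← slice_eq h0u]
        ext y
        simp only [hB, Set.mem_preimage, Set.mem_setOf_eq]
        tauto
      · rw [Set.indicator_of_notMem hu]
        have : Prod.mk u ⁻¹' B = ∅ := by
          ext y
          simp only [hB, Set.mem_preimage, Set.mem_setOf_eq, Set.mem_empty_iff_false, iff_false]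
          intro h
          exact hu h.1
        rw [this, measure_empty]
    -- pointwise lower bound on the slice volume
    have hpoint : ∀ u ∈ Set.Ioo a 1,
        ENNReal.ofReal (u^n - c*n*u^(n-1)) ≤ volume (u • S n (c/u)) := by
      intro u hu
      have h0u : 0 < u := lt_trans ha0 hu.1
      have hcu : 0 < c / u := div_pos hc h0u
      have hsmul : volume (u • S n (c/u))
          = ENNReal.ofReal (u ^ n) * volume (S n (c/u)) := by
        rw [Measure.addHaar_smul]
        congr 2
        rw [Module.finrank_fin_fun, abs_of_pos (pow_pos h0u n)]
      rw [hsmul]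
      have heq : u^n - c*n*u^(n-1) = u^n * (1 - (c/u) * n) := by
        rcases Nat.eq_zero_or_pos n with hn | hn
        · subst hn; simp
        · obtain ⟨m, rfl⟩ := Nat.exists_eq_succ_of_ne_zero hn.ne'
          field_simp
          simp only [Nat.succ_sub_one, Nat.succ_eq_add_one]
          ring
      rw [heq, ENNReal.ofReal_mul (pow_nonneg h0u.le n)]
      exact mul_le_mul_right (IH (c/u) hcu) _
    -- value of the integral
    have hval : ∫⁻ u in Set.Ioo a 1, ENNReal.ofReal (u^n - c*n*u^(n-1))
        = ENNReal.ofReal ((1-a)/((n:ℝ)+1)) := by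
      have hfc : Continuous (fun u : ℝ => u^n - c*n*u^(n-1)) :=
        (continuous_pow n).sub (continuous_const.mul (continuous_pow (n-1)))
      rw [setLIntegral_congr Ioo_ae_eq_Ioc]
      rw [← ofReal_integral_eq_lintegral_ofReal hfc.integrableOn_Ioc]
      · congr 1
        rw [← intervalIntegral.integral_of_le ha1.le]
        have hderiv : ∀ u ∈ Set.uIcc a 1,
            HasDerivAt (fun u : ℝ => u^(n+1)/((n:ℝ)+1) - c*u^n)
              (u^n - c*n*u^(n-1)) u := by
          intro u _
          have h1 := (hasDerivAt_pow (n+1) u).div_const ((n:ℝ)+1)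
          have h2 := (hasDerivAt_pow n u).const_mul c
          refine (h1.sub h2).congr_deriv ?_
          have hne : (n:ℝ) + 1 ≠ 0 := by positivity
          push_cast
          field_simp
        rw [intervalIntegral.integral_eq_sub_of_hasDerivAt hderiv
          (hfc.intervalIntegrable a 1)]
        have hne : (n:ℝ) + 1 ≠ 0 := by positivity
        rw [ha]
        rw [pow_succ ((c * ((n:ℝ)+1))) n]
        field_simp
        ring
      · refine (ae_restrict_iff' measurableSet_Ioc).2 (ae_of_all _ fun u hu => ?_)
        have h0u : 0 < u := lt_trans ha0 hu.1
        have hcn : c * n ≤ u := by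
          have : c * n ≤ a := by rw [ha]; nlinarith [Nat.cast_nonneg (α := ℝ) n]
          linarith [hu.1]
        rcases Nat.eq_zero_or_pos n with hn | hn
        · subst hn; simp
        · obtain ⟨m, rfl⟩ := Nat.exists_eq_succ_of_ne_zero hn.ne'
          have hp : (0:ℝ) ≤ u ^ m := pow_nonneg h0u.le m
          have hps : u ^ (m+1) = u ^ m * u := pow_succ u m
          show (0:ℝ) ≤ u ^ (m+1) - c * ((m+1:ℕ):ℝ) * u ^ ((m+1) - 1)
          simp only [Nat.add_sub_cancel]
          push_cast at hcn ⊢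
          nlinarith
    -- per-sector lower bound
    have hsector : ∀ i : Fin (n+1),
        ENNReal.ofReal ((1-a)/((n:ℝ)+1)) ≤ volume (S (n+1) c ∩ sec i) := by
      intro i
      have hmp := volume_preserving_piFinSuccAbove (fun _ : Fin (n+1) => ℝ) i
      have h1 : volume ((MeasurableEquiv.piFinSuccAbove (fun _ => ℝ) i) ⁻¹' B)
          = volume B := hmp.measure_preimage hBmeas.nullMeasurableSet
      have h2 : (volume : Measure (ℝ × (Fin n → ℝ))) B
          = ∫⁻ u, volume (Prod.mk u ⁻¹' B) := by
        rw [Measure.volume_eq_prod, Measure.prod_apply hBmeas]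
      calc ENNReal.ofReal ((1-a)/((n:ℝ)+1))
          = ∫⁻ u in Set.Ioo a 1, ENNReal.ofReal (u^n - c*n*u^(n-1)) := hval.symm
        _ ≤ ∫⁻ u in Set.Ioo a 1, volume (u • S n (c/u)) :=
            setLIntegral_mono' measurableSet_Ioo hpoint
        _ = ∫⁻ u, volume (Prod.mk u ⁻¹' B) := by
            rw [← lintegral_indicator measurableSet_Ioo]
            congr 1
            ext u
            rw [hslice u]
        _ = volume ((MeasurableEquiv.piFinSuccAbove (fun _ => ℝ) i) ⁻¹' B) := by
            rw [h1, h2]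
        _ ≤ volume (S (n+1) c ∩ sec i) := measure_mono (hincl i)
    -- sectors are pairwise disjoint
    have hdisj : Pairwise (Function.onFun Disjoint
        (fun i : Fin (n+1) => S (n+1) c ∩ sec i)) := by
      intro i i' hii'
      refine Set.disjoint_left.2 fun x hx hx' => ?_
      obtain ⟨j, hj⟩ := Fin.exists_succAbove_eq (Ne.symm hii')
      obtain ⟨j', hj'⟩ := Fin.exists_succAbove_eq hii'
      have h1 : x i' < x i := by rw [← hj]; exact hx.2 j
      have h2 : x i < x i' := by rw [← hj']; exact hx'.2 j'
      exact absurd (lt_trans h1 h2) (lt_irrefl _)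
    -- combine
    have hunion : volume (⋃ i : Fin (n+1), (S (n+1) c ∩ sec i))
        = ∑ i : Fin (n+1), volume (S (n+1) c ∩ sec i) := by
      rw [measure_iUnion hdisj (fun i => (measurableSet_S _ _).inter (hsecMeas i))]
      exact tsum_fintype _
    have hfinal : ENNReal.ofReal (1 - a) ≤ volume (S (n+1) c) := by
      calc ENNReal.ofReal (1 - a)
          = ENNReal.ofReal (((n:ℝ)+1) * ((1-a)/((n:ℝ)+1))) := by
            congr 1
            field_simp
        _ = ENNReal.ofReal ((n:ℝ)+1) * ENNReal.ofReal ((1-a)/((n:ℝ)+1)) :=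
            ENNReal.ofReal_mul (by positivity)
        _ = (n+1 : ℕ) * ENNReal.ofReal ((1-a)/((n:ℝ)+1)) := by
            congr 1
            rw [← ENNReal.ofReal_natCast (n+1)]
            congr 1
            push_cast
            ring
        _ = ∑ _i : Fin (n+1), ENNReal.ofReal ((1-a)/((n:ℝ)+1)) := by
            rw [Finset.sum_const, Finset.card_univ, Fintype.card_fin, nsmul_eq_mul]
        _ ≤ ∑ i : Fin (n+1), volume (S (n+1) c ∩ sec i) :=
            Finset.sum_le_sum fun i _ => hsector i
        _ = volume (⋃ i : Fin (n+1), (S (n+1) c ∩ sec i)) := hunion.symm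
        _ ≤ volume (S (n+1) c) := measure_mono (Set.iUnion_subset fun i =>
            Set.inter_subset_left)
    calc ENNReal.ofReal (1 - c * ((n+1:ℕ):ℝ)) = ENNReal.ofReal (1 - a) := by
          rw [haN]
      _ ≤ volume (S (n+1) c) := hfinal

end SimesAux

namespace SimesAux

lemma sorted_le_iff {m : ℕ} (x : Fin m → ℝ) (k : Fin m) (t : ℝ) :
    x (Tuple.sort x k) ≤ t ↔ (k : ℕ) < cnt x t := by
  have h := Tuple.lt_card_le_iff_apply_le_of_monotone (f := x ∘ Tuple.sort x) (a := t)
    (j := k) (Tuple.monotone_sort x)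
  have hcard : Fintype.card {i // (x ∘ Tuple.sort x) i ≤ t} = cnt x t := by
    have e : {i // (x ∘ Tuple.sort x) i ≤ t} ≃ {j // x j ≤ t} :=
      (Tuple.sort x).subtypeEquiv (fun i => Iff.rfl)
    rw [Fintype.card_congr e, Fintype.card_subtype]
    rfl
  rw [← hcard, Fintype.card_subtype]
  exact h.symm

lemma pi_restrict (m : ℕ) :
    Measure.pi (fun _ : Fin m => (volume : Measure ℝ).restrict (Set.Icc 0 1))
      = (volume : Measure (Fin m → ℝ)).restrict (Set.univ.pi fun _ => Set.Icc 0 1) := by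
  apply Measure.pi_eq
  intro A hA
  rw [Measure.restrict_apply (MeasurableSet.univ_pi hA)]
  have hint : Set.univ.pi A ∩ Set.univ.pi (fun _ => Set.Icc (0:ℝ) 1)
      = Set.univ.pi (fun i => A i ∩ Set.Icc 0 1) := (Set.pi_inter_distrib).symm
  rw [hint, volume_pi, Measure.pi_pi]
  exact Finset.prod_congr rfl fun i _ => (Measure.restrict_apply (hA i)).symm

end SimesAux


end SimesAuxSection

open SimesAux in
/-- **Simes-type step-down bound.**
Let `U_(1) ≤ … ≤ U_(m)` be the order statistics (obtained via `Tuple.sort`, with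
0-based index `k` denoting the `(k+1)`-th smallest value) of `m` i.i.d. Uniform[0,1]
random variables.  Then for every `γ ∈ (0,1)`,
`P(∃ k, U_(k) ≤ γ·k/m) ≤ γ`. -/
theorem simes_stepdown_bound
    {Ω : Type*} [MeasurableSpace Ω] (μ : Measure Ω) [IsProbabilityMeasure μ]
    (m : ℕ) (U : Fin m → Ω → ℝ) (hUmeas : ∀ i, Measurable (U i))
    (hindep : iIndepFun U μ)
    (hunif : ∀ i, μ.map (U i) = (volume : Measure ℝ).restrict (Set.Icc 0 1))
    (γ : ℝ) (hγ0 : 0 < γ) (hγ1 : γ < 1) :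
    μ {ω | ∃ k : Fin m,
        (fun i => U i ω) (Tuple.sort (fun i => U i ω) k)
          ≤ γ * ((k.val : ℝ) + 1) / (m : ℝ)} ≤ ENNReal.ofReal γ := by
  classical
  rcases Nat.eq_zero_or_pos m with hm | hm
  · subst hm
    have h0 : {ω : Ω | ∃ k : Fin 0,
        (fun i => U i ω) (Tuple.sort (fun i => U i ω) k)
          ≤ γ * ((k.val : ℝ) + 1) / ((0:ℕ) : ℝ)} = ∅ :=
      Set.eq_empty_iff_forall_notMem.2 (fun ω h => h.choose.elim0)
    rw [h0, measure_empty]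
    exact zero_le
  set c : ℝ := γ / m with hcdef
  have hc : 0 < c := div_pos hγ0 (Nat.cast_pos.2 hm)
  set T : Ω → (Fin m → ℝ) := fun ω i => U i ω with hTdef
  have hTmeas : Measurable T := measurable_pi_lambda _ hUmeas
  set E : Set (Fin m → ℝ) :=
    {x | ∃ k : Fin m, (k.val : ℕ) < cnt x (γ * ((k.val : ℝ) + 1) / m)} with hEdef
  have hEmeas : MeasurableSet E := by
    have : E = ⋃ k : Fin m,
        (fun x : Fin m → ℝ => cnt x (γ * ((k.val : ℝ) + 1) / m)) ⁻¹' (Set.Ioi k.val) := by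
      ext x
      simp only [hEdef, Set.mem_setOf_eq, Set.mem_iUnion, Set.mem_preimage, Set.mem_Ioi]
    rw [this]
    exact MeasurableSet.iUnion fun k => (measurable_cnt _) (measurableSet_Ioi (α := ℕ))
  have hset : {ω | ∃ k : Fin m,
      (fun i => U i ω) (Tuple.sort (fun i => U i ω) k)
        ≤ γ * ((k.val : ℝ) + 1) / (m : ℝ)} = T ⁻¹' E := by
    ext ω
    simp only [Set.mem_setOf_eq, Set.mem_preimage, hEdef]
    exact exists_congr fun k => sorted_le_iff (T ω) k _
  have hmap : Measure.pi (fun _ : Fin m => (volume : Measure ℝ).restrict (Set.Icc 0 1))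
      = μ.map T := by
    apply Measure.pi_eq
    intro A hA
    rw [Measure.map_apply hTmeas (MeasurableSet.univ_pi hA)]
    have hpre : T ⁻¹' (Set.univ.pi A)
        = ⋂ i ∈ (Finset.univ : Finset (Fin m)), U i ⁻¹' A i := by
      ext ω
      simp [Set.mem_pi, hTdef]
    rw [hpre, hindep.measure_inter_preimage_eq_mul Finset.univ (fun i _ => hA i)]
    exact Finset.prod_congr rfl fun i _ => by
      rw [← Measure.map_apply (hUmeas i) (hA i), hunif i]
  set π : Measure (Fin m → ℝ) :=
    Measure.pi (fun _ : Fin m => (volume : Measure ℝ).restrict (Set.Icc 0 1)) with hπdef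
  have hπuniv : π Set.univ = 1 := by
    rw [hπdef, ← Set.pi_univ Set.univ, Measure.pi_pi]
    simp [Real.volume_Icc]
  have hsubcube : S m c ⊆ Set.univ.pi fun _ : Fin m => Set.Icc (0:ℝ) 1 := by
    intro x hx
    intro i _
    exact Set.Ico_subset_Icc_self (hx.1 i)
  have hsub : S m c ⊆ Eᶜ := by
    intro x hx
    simp only [Set.mem_compl_iff, hEdef, Set.mem_setOf_eq, not_exists, not_lt]
    intro k
    have hth : γ * ((k.val : ℝ) + 1) / m = c * ((k.val : ℝ) + 1) := by
      rw [hcdef]; ring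
    rw [hth]
    exact hx.2 k
  have hcompl : ENNReal.ofReal (1 - γ) ≤ π Eᶜ := by
    calc ENNReal.ofReal (1 - γ) = ENNReal.ofReal (1 - c * m) := by
          congr 1
          rw [hcdef]
          field_simp
      _ ≤ volume (S m c) := volume_S m c hc
      _ = π (S m c) := by
          rw [hπdef, pi_restrict, Measure.restrict_apply (measurableSet_S m c),
            Set.inter_eq_self_of_subset_left hsubcube]
      _ ≤ π Eᶜ := measure_mono hsub
  have hE1 : π E ≤ ENNReal.ofReal γ := by
    have hadd : π E + π Eᶜ = 1 := by
      rw [measure_add_measure_compl hEmeas, hπuniv]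
    have hne : π Eᶜ ≠ ⊤ := by
      refine ne_top_of_le_ne_top ENNReal.one_ne_top ?_
      rw [← hπuniv]
      exact measure_mono (Set.subset_univ _)
    have hEeq : π E = 1 - π Eᶜ := ENNReal.eq_sub_of_add_eq hne hadd
    rw [hEeq]
    calc (1:ℝ≥0∞) - π Eᶜ ≤ 1 - ENNReal.ofReal (1 - γ) := tsub_le_tsub_left hcompl 1
      _ = ENNReal.ofReal γ := by
          rw [← ENNReal.ofReal_one, ← ENNReal.ofReal_sub 1 (by linarith : (0:ℝ) ≤ 1 - γ)]
          congr 1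
          ring
  rw [hset, ← Measure.map_apply hTmeas hEmeas, ← hmap]
  exact hE1
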